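/- arXiv:math/0503601 — 2 statements merged into one kernel-verified Lean document; each statement's English description precedes it below -/
import Mathlib

section
/- Let (a_k)_{k \ge 1} be real numbers with sup_k a_k < 1 and \sum_k |a_k| < \infty, and let (Z_k) be i.i.d. standard normal random variables. Then E[exp((1/2) \sum_{k=1}^\infty a_k Z_k^2)] = \prod_{k=1}^\infty (1 - a_k)^{-1/2}, and both sides are finite. -/
open MeasureTheory ProbabilityTheory Real Filter
open scoped NNReal ENNReal

lemma aux_abs_log_le {t : ℝ} (h : |t| ≤ 1/2) : |Real.log (1 - t)| ≤ 2 * |t| := by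
  have h1 : -(1/2 : ℝ) ≤ t := (abs_le.1 h).1
  have h2 : t ≤ 1/2 := (abs_le.1 h).2
  have hpos : (0:ℝ) < 1 - t := by linarith
  rcases le_or_gt t 0 with ht | ht
  · have h3 : Real.log (1 - t) ≤ -t := by
      have := Real.log_le_sub_one_of_pos hpos; linarith
    have h4 : 0 ≤ Real.log (1 - t) := Real.log_nonneg (by linarith)
    rw [abs_of_nonneg h4, abs_of_nonpos ht]; linarith
  · have h3 : Real.log (1 - t) ≤ 0 := Real.log_nonpos (by linarith) (by linarith)
    rw [abs_of_nonpos h3, abs_of_pos ht]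
    have hinv : -Real.log (1 - t) = Real.log (1 - t)⁻¹ := (Real.log_inv _).symm
    rw [hinv]
    have h5 : Real.log (1-t)⁻¹ ≤ (1-t)⁻¹ - 1 :=
      Real.log_le_sub_one_of_pos (by positivity)
    have h6 : (1-t)⁻¹ - 1 = t / (1-t) := by field_simp; ring
    have h7 : t / (1 - t) ≤ 2 * t := by
      rw [div_le_iff₀ hpos]; nlinarith
    linarith

lemma aux_summable_log {c : ℕ → ℝ} (h2 : Summable fun k => |c k|) :
    Summable fun k => Real.log (1 - c k) := by
  apply Summable.of_abs
  have htend : Filter.Tendsto (fun k => |c k|) Filter.atTop (nhds 0) := h2.tendsto_atTop_zero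
  obtain ⟨N, hN⟩ := (htend.eventually_le_const (by norm_num : (0:ℝ) < 1/2)).exists_forall_of_atTop
  rw [← summable_nat_add_iff N]
  apply Summable.of_nonneg_of_le (fun k => abs_nonneg _)
    (fun k => aux_abs_log_le (hN (k + N) (Nat.le_add_left _ _)))
  exact ((summable_nat_add_iff N).2 h2).mul_left 2

lemma aux_hasProd {c : ℕ → ℝ} (h1 : ∀ k, c k < 1)
    (h2 : Summable fun k => Real.log (1 - c k)) :
    HasProd (fun k => (1 - c k) ^ (-(1:ℝ)/2))
      (Real.exp (∑' k, (-(1:ℝ)/2) * Real.log (1 - c k))) := by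
  have hs : HasSum (fun k => (-(1:ℝ)/2) * Real.log (1 - c k))
      (∑' k, (-(1:ℝ)/2) * Real.log (1 - c k)) := (h2.mul_left _).hasSum
  have h := hs.exp (𝔸 := ℝ)
  simp only [Real.exp_eq_exp_ℝ.symm] at h
  have heq : (fun k => (1 - c k) ^ (-(1:ℝ)/2))
      = (rexp ∘ fun k => -(1:ℝ)/2 * Real.log (1 - c k)) := by
    funext k
    simp only [Function.comp_apply]
    rw [Real.rpow_def_of_pos (by linarith [h1 k])]
    ring_nf
  rw [heq]; exact h

lemma aux_gauss_int {c : ℝ} (hc : c < 1) :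
    Integrable (fun x => Real.exp (c / 2 * x ^ 2)) (gaussianReal 0 1) ∧
      ∫ x, Real.exp (c / 2 * x ^ 2) ∂(gaussianReal 0 1) = (1 - c) ^ (-(1:ℝ) / 2) := by
  have hb : (0:ℝ) < (1 - c) / 2 := by linarith
  have hG : gaussianReal 0 1 = volume.withDensity (gaussianPDF 0 1) :=
    gaussianReal_of_var_ne_zero 0 one_ne_zero
  have hpdf : ∀ x : ℝ, gaussianPDFReal 0 1 x = (√(2 * π))⁻¹ * rexp (-(x^2) / 2) := by
    intro x
    simp [gaussianPDFReal]
  have hprod : ∀ x : ℝ, gaussianPDFReal 0 1 x * rexp (c / 2 * x ^ 2)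
      = (√(2 * π))⁻¹ * rexp (-((1 - c) / 2) * x ^ 2) := by
    intro x
    rw [hpdf x, mul_assoc, ← Real.exp_add]
    ring_nf
  have hint : Integrable (fun x => (√(2 * π))⁻¹ * rexp (-((1 - c) / 2) * x ^ 2)) volume :=
    (integrable_exp_neg_mul_sq hb).const_mul _
  have hint2 : Integrable (fun x => rexp (c / 2 * x ^ 2) * gaussianPDFReal 0 1 x) volume := by
    refine hint.congr ?_
    filter_upwards with x
    rw [← hprod x]; ring
  constructor
  · rw [hG, integrable_withDensity_iff (measurable_gaussianPDF 0 1)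
      (Filter.Eventually.of_forall fun x => ENNReal.ofReal_lt_top)]
    refine hint2.congr ?_
    filter_upwards with x
    rw [gaussianPDF]
    rw [ENNReal.toReal_ofReal (gaussianPDFReal_nonneg 0 1 x)]
  · rw [hG]
    have hd : gaussianPDF 0 1
        = fun x => ((Real.toNNReal (gaussianPDFReal 0 1 x) : ℝ≥0) : ℝ≥0∞) := rfl
    rw [hd, integral_withDensity_eq_integral_smul
      ((measurable_gaussianPDFReal 0 1).real_toNNReal) _]
    have heq : ∀ x : ℝ, (Real.toNNReal (gaussianPDFReal 0 1 x) : ℝ≥0) • rexp (c / 2 * x ^ 2)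
        = (√(2 * π))⁻¹ * rexp (-((1 - c) / 2) * x ^ 2) := by
      intro x
      rw [NNReal.smul_def, smul_eq_mul, Real.coe_toNNReal _ (gaussianPDFReal_nonneg 0 1 x),
        hprod x]
    rw [integral_congr_ae (Filter.Eventually.of_forall heq), integral_const_mul,
      integral_gaussian]
    rw [div_div_eq_mul_div, Real.sqrt_div (by positivity : (0:ℝ) ≤ π * 2) (1 - c)]
    have h2pi : √(2 * π) = √(π * 2) := by ring_nf
    rw [h2pi, div_eq_mul_inv, ← mul_assoc, inv_mul_cancel₀ (by positivity), one_mul]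
    rw [show (-(1:ℝ)/2) = -(1/2) by ring, Real.rpow_neg (by linarith), ← Real.sqrt_eq_rpow]

lemma aux_finite_stage {Ω : Type*} [MeasurableSpace Ω] (μ : Measure Ω) [IsProbabilityMeasure μ]
    (c : ℕ → ℝ) (h1 : ∀ k, c k < 1)
    (Z : ℕ → Ω → ℝ) (hmeas : ∀ k, Measurable (Z k))
    (hindep : iIndepFun Z μ)
    (hlaw : ∀ k, μ.map (Z k) = gaussianReal 0 1) (n : ℕ) :
    Integrable (fun ω => Real.exp ((1:ℝ)/2 * ∑ k ∈ Finset.range n, c k * Z k ω ^ 2)) μ ∧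
      ∫ ω, Real.exp ((1:ℝ)/2 * ∑ k ∈ Finset.range n, c k * Z k ω ^ 2) ∂μ
        = ∏ k ∈ Finset.range n, (1 - c k) ^ (-(1:ℝ)/2) := by
  have hsingle : ∀ k : ℕ, Integrable (fun ω => rexp ((1:ℝ)/2 * (c k * Z k ω ^ 2))) μ ∧
      ∫ ω, rexp ((1:ℝ)/2 * (c k * Z k ω ^ 2)) ∂μ = (1 - c k) ^ (-(1:ℝ)/2) := by
    intro k
    have heq : (fun ω => rexp ((1:ℝ)/2 * (c k * Z k ω ^ 2)))
        = (fun x => rexp (c k / 2 * x ^ 2)) ∘ Z k := by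
      funext ω; simp only [Function.comp_apply]; ring_nf
    have hg : AEStronglyMeasurable (fun x => rexp (c k / 2 * x ^ 2)) (μ.map (Z k)) :=
      (Real.continuous_exp.comp (continuous_const.mul (continuous_pow 2))).aestronglyMeasurable
    constructor
    · rw [heq, ← integrable_map_measure hg (hmeas k).aemeasurable, hlaw k]
      exact (aux_gauss_int (h1 k)).1
    · rw [heq, show (fun x => rexp (c k / 2 * x ^ 2)) ∘ Z k
        = fun ω => rexp (c k / 2 * Z k ω ^ 2) from rfl]
      rw [← integral_map (hmeas k).aemeasurable hg, hlaw k]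
      exact (aux_gauss_int (h1 k)).2
  set X : ℕ → Ω → ℝ := fun k ω => c k * Z k ω ^ 2 with hXdef
  have hXmeas : ∀ k, Measurable (X k) := fun k => ((hmeas k).pow_const 2).const_mul _
  have hX : iIndepFun X μ :=
    hindep.comp (fun k x => c k * x ^ 2)
      (fun k => (measurable_id.pow_const 2).const_mul _)
  have hsum_apply : ∀ ω, (∑ i ∈ Finset.range n, X i) ω
      = ∑ k ∈ Finset.range n, c k * Z k ω ^ 2 :=
    fun ω => by rw [Finset.sum_apply]
  constructor
  · have := hX.integrable_exp_mul_sum (t := (1:ℝ)/2) hXmeas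
      (s := Finset.range n) (fun i _ => (hsingle i).1)
    refine this.congr (Filter.Eventually.of_forall fun ω => ?_)
    simp only [hsum_apply]
  · have hmgf := hX.mgf_sum (t := (1:ℝ)/2) hXmeas (Finset.range n)
    have h1' : ∫ ω, rexp ((1:ℝ)/2 * ∑ k ∈ Finset.range n, c k * Z k ω ^ 2) ∂μ
        = mgf (∑ i ∈ Finset.range n, X i) μ ((1:ℝ)/2) := by
      rw [mgf]
      refine integral_congr_ae (Filter.Eventually.of_forall fun ω => ?_)
      simp only [hsum_apply]
    rw [h1', hmgf]
    refine Finset.prod_congr rfl fun k _ => ?_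
    rw [mgf, ← (hsingle k).2]

theorem gaussian_chaos_product_formula
    {Ω : Type*} [MeasurableSpace Ω] (μ : Measure Ω) [IsProbabilityMeasure μ]
    (a : ℕ → ℝ) (hsup : ∀ k, a k < 1) (hsum : Summable fun k => |a k|)
    (Z : ℕ → Ω → ℝ) (hmeas : ∀ k, Measurable (Z k))
    (hindep : iIndepFun Z μ)
    (hlaw : ∀ k, μ.map (Z k) = gaussianReal 0 1) :
    Integrable (fun ω => Real.exp ((1 : ℝ) / 2 * ∑' k, a k * (Z k ω) ^ 2)) μ ∧
      ∫ ω, Real.exp ((1 : ℝ) / 2 * ∑' k, a k * (Z k ω) ^ 2) ∂μ =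
        ∏' k, (1 - a k) ^ (-(1 : ℝ) / 2) := by
  classical
  set b : ℕ → ℝ := fun k => max (a k) 0 with hbdef
  have hb1 : ∀ k, b k < 1 := fun k => max_lt (hsup k) one_pos
  have hb0 : ∀ k, 0 ≤ b k := fun k => le_max_right _ _
  have hab : ∀ k, a k ≤ b k := fun k => le_max_left _ _
  have hble : ∀ k, |b k| ≤ |a k| := by
    intro k
    rw [abs_of_nonneg (hb0 k)]
    rcases le_or_gt (a k) 0 with h | h
    · simp [hbdef, max_eq_right h]
    · rw [hbdef]; simp only [max_eq_left h.le]; exact le_abs_self _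
  have hbsum : Summable fun k => |b k| :=
    Summable.of_nonneg_of_le (fun k => abs_nonneg _) hble hsum
  -- second moment
  have hx2 : Integrable (fun x : ℝ => x ^ 2) (gaussianReal 0 1) := by
    have h4 := (aux_gauss_int (show (1:ℝ)/2 < 1 by norm_num)).1
    refine ((h4.const_mul 4).mono ((continuous_pow 2).aestronglyMeasurable) ?_)
    filter_upwards with x
    have h5 : ((1:ℝ)/2/2 * x ^ 2) + 1 ≤ rexp ((1:ℝ)/2/2 * x ^ 2) := Real.add_one_le_exp _
    have h6 : (0:ℝ) ≤ rexp ((1:ℝ)/2/2 * x ^ 2) := (Real.exp_pos _).le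
    rw [Real.norm_eq_abs, Real.norm_eq_abs, abs_of_nonneg (sq_nonneg x),
      abs_of_nonneg (by positivity : (0:ℝ) ≤ 4 * rexp ((1:ℝ)/2/2 * x ^ 2))]
    nlinarith [sq_nonneg x]
  set C : ℝ := ∫ x, x ^ 2 ∂(gaussianReal 0 1) with hCdef
  have hZ2int : ∀ k, Integrable (fun ω => Z k ω ^ 2) μ := by
    intro k
    have : Integrable ((fun x : ℝ => x ^ 2) ∘ Z k) μ := by
      rw [← integrable_map_measure ((continuous_pow 2).aestronglyMeasurable)
        (hmeas k).aemeasurable, hlaw k]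
      exact hx2
    exact this
  have hZ2val : ∀ k, ∫ ω, Z k ω ^ 2 ∂μ = C := by
    intro k
    rw [hCdef, ← hlaw k, integral_map (hmeas k).aemeasurable
      ((continuous_pow 2).aestronglyMeasurable)]
  have hC0 : 0 ≤ C := by
    rw [hCdef]; exact integral_nonneg fun x => sq_nonneg x
  -- a.e. summability
  have hZsqmeas : ∀ k : ℕ, Measurable fun ω => Z k ω ^ 2 := fun k => (hmeas k).pow_const 2
  have hae : ∀ᵐ ω ∂μ, Summable fun k => |a k| * Z k ω ^ 2 := by
    have hlint : ∫⁻ ω, ∑' k, ENNReal.ofReal (|a k| * Z k ω ^ 2) ∂μ ≠ ⊤ := by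
      rw [lintegral_tsum (fun k => ((hZsqmeas k).const_mul _).ennreal_ofReal.aemeasurable)]
      have heach : ∀ k : ℕ, ∫⁻ ω, ENNReal.ofReal (|a k| * Z k ω ^ 2) ∂μ
          = ENNReal.ofReal (|a k| * C) := by
        intro k
        rw [← ofReal_integral_eq_lintegral_ofReal ((hZ2int k).const_mul _)
          (Filter.Eventually.of_forall fun ω => by positivity)]
        rw [integral_const_mul, hZ2val k]
      simp only [heach]
      rw [← ENNReal.ofReal_tsum_of_nonneg (fun k => by positivity) (hsum.mul_right C)]
      exact ENNReal.ofReal_ne_top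
    have hmeas' : Measurable fun ω => ∑' k, ENNReal.ofReal (|a k| * Z k ω ^ 2) :=
      Measurable.ennreal_tsum fun k => ((hZsqmeas k).const_mul _).ennreal_ofReal
    filter_upwards [ae_lt_top hmeas' hlint] with ω hω
    have hsum' : Summable fun k => (ENNReal.ofReal (|a k| * Z k ω ^ 2)).toReal :=
      ENNReal.summable_toReal hω.ne
    refine hsum'.congr fun k => ?_
    rw [ENNReal.toReal_ofReal (by positivity)]
  have haesum : ∀ᵐ ω ∂μ, (Summable fun k => a k * Z k ω ^ 2)
      ∧ (Summable fun k => b k * Z k ω ^ 2) := by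
    filter_upwards [hae] with ω hω
    constructor
    · refine Summable.of_abs (hω.congr fun k => ?_)
      rw [abs_mul, abs_of_nonneg (sq_nonneg (Z k ω))]
    · refine Summable.of_nonneg_of_le (fun k => by positivity) (fun k => ?_) hω
      have hbk : b k ≤ |a k| := by
        have := hble k; rwa [abs_of_nonneg (hb0 k)] at this
      exact mul_le_mul_of_nonneg_right hbk (sq_nonneg _)
  -- finite stage facts
  have hfa := aux_finite_stage μ a hsup Z hmeas hindep hlaw
  have hfb := aux_finite_stage μ b hb1 Z hmeas hindep hlaw
  have hla := aux_summable_log hsum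
  have hlb := aux_summable_log hbsum
  have hPa := aux_hasProd hsup hla
  have hPb := aux_hasProd hb1 hlb
  set G : Ω → ℝ := fun ω => Real.exp ((1 : ℝ) / 2 * ∑' k, b k * (Z k ω) ^ 2) with hGdef
  set F : Ω → ℝ := fun ω => Real.exp ((1 : ℝ) / 2 * ∑' k, a k * (Z k ω) ^ 2) with hFdef
  set gn : ℕ → Ω → ℝ :=
    fun n ω => Real.exp ((1 : ℝ) / 2 * ∑ k ∈ Finset.range n, b k * Z k ω ^ 2) with hgndef
  set fn : ℕ → Ω → ℝ :=
    fun n ω => Real.exp ((1 : ℝ) / 2 * ∑ k ∈ Finset.range n, a k * Z k ω ^ 2) with hfndef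
  have hgnmeas : ∀ n, Measurable (gn n) := fun n =>
    ((Finset.measurable_sum (Finset.range n) fun k _ => (hZsqmeas k).const_mul (b k)).const_mul
      ((1:ℝ)/2)).exp
  have hfnmeas : ∀ n, Measurable (fn n) := fun n =>
    ((Finset.measurable_sum (Finset.range n) fun k _ => (hZsqmeas k).const_mul (a k)).const_mul
      ((1:ℝ)/2)).exp
  have htendg : ∀ᵐ ω ∂μ, Tendsto (fun n => gn n ω) atTop (nhds (G ω)) := by
    filter_upwards [haesum] with ω hω
    exact (hω.2.hasSum.tendsto_sum_nat.const_mul ((1:ℝ)/2)).rexp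
  have htendf : ∀ᵐ ω ∂μ, Tendsto (fun n => fn n ω) atTop (nhds (F ω)) := by
    filter_upwards [haesum] with ω hω
    exact (hω.1.hasSum.tendsto_sum_nat.const_mul ((1:ℝ)/2)).rexp
  -- bound on partial products
  set B : ℝ := Real.exp (∑' k, (-(1:ℝ)/2) * Real.log (1 - b k)) with hBdef
  have hPble : ∀ n, ∏ k ∈ Finset.range n, (1 - b k) ^ (-(1:ℝ)/2) ≤ B := by
    intro n
    have hexp : ∏ k ∈ Finset.range n, (1 - b k) ^ (-(1:ℝ)/2)
        = Real.exp (∑ k ∈ Finset.range n, (-(1:ℝ)/2) * Real.log (1 - b k)) := by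
      rw [Real.exp_sum]
      refine Finset.prod_congr rfl fun k _ => ?_
      rw [Real.rpow_def_of_pos (by linarith [hb1 k])]
      ring_nf
    rw [hexp, hBdef, Real.exp_le_exp]
    refine Summable.sum_le_tsum (Finset.range n) (fun k _ => ?_) (hlb.mul_left _)
    have hlog : Real.log (1 - b k) ≤ 0 :=
      Real.log_nonpos (by linarith [hb0 k, hb1 k]) (by linarith [hb0 k])
    nlinarith [hlog]
  -- lintegral of G is finite
  have hgn_lint : ∀ n, ∫⁻ ω, ENNReal.ofReal (gn n ω) ∂μ
      = ENNReal.ofReal (∏ k ∈ Finset.range n, (1 - b k) ^ (-(1:ℝ)/2)) := by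
    intro n
    rw [← ofReal_integral_eq_lintegral_ofReal (hfb n).1
      (Filter.Eventually.of_forall fun ω => (Real.exp_pos _).le), (hfb n).2]
  have hmonog : ∀ᵐ ω ∂μ, Monotone fun n => ENNReal.ofReal (gn n ω) := by
    refine Filter.Eventually.of_forall fun ω m n hmn => ?_
    refine ENNReal.ofReal_le_ofReal (Real.exp_le_exp.2 (mul_le_mul_of_nonneg_left ?_ (by norm_num)))
    exact Finset.sum_le_sum_of_subset_of_nonneg (Finset.range_subset_range.2 hmn)
      (fun k _ _ => by positivity)
  have hlimg : Tendsto (fun n => ∫⁻ ω, ENNReal.ofReal (gn n ω) ∂μ) atTop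
      (nhds (∫⁻ ω, ENNReal.ofReal (G ω) ∂μ)) := by
    refine lintegral_tendsto_of_tendsto_of_monotone
      (fun n => (hgnmeas n).ennreal_ofReal.aemeasurable) hmonog ?_
    filter_upwards [htendg] with ω hω
    exact ENNReal.tendsto_ofReal hω
  have hGlint : ∫⁻ ω, ENNReal.ofReal (G ω) ∂μ ≤ ENNReal.ofReal B := by
    refine le_of_tendsto hlimg (Filter.Eventually.of_forall fun n => ?_)
    rw [hgn_lint n]
    exact ENNReal.ofReal_le_ofReal (hPble n)
  have hGmeasAE : AEStronglyMeasurable G μ :=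
    aestronglyMeasurable_of_tendsto_ae atTop (fun n => (hgnmeas n).aestronglyMeasurable) htendg
  have hGint : Integrable G μ := by
    refine ⟨hGmeasAE, ?_⟩
    rw [hasFiniteIntegral_iff_ofReal (Filter.Eventually.of_forall fun ω => (Real.exp_pos _).le)]
    exact lt_of_le_of_lt hGlint ENNReal.ofReal_lt_top
  -- domination
  have hbound : ∀ n, ∀ᵐ ω ∂μ, ‖fn n ω‖ ≤ G ω := by
    intro n
    filter_upwards [haesum] with ω hω
    rw [Real.norm_eq_abs, abs_of_nonneg (Real.exp_pos _).le]
    show Real.exp ((1:ℝ)/2 * ∑ k ∈ Finset.range n, a k * Z k ω ^ 2)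
      ≤ Real.exp ((1:ℝ)/2 * ∑' k, b k * Z k ω ^ 2)
    refine Real.exp_le_exp.2 (mul_le_mul_of_nonneg_left ?_ (by norm_num))
    calc ∑ k ∈ Finset.range n, a k * Z k ω ^ 2
        ≤ ∑ k ∈ Finset.range n, b k * Z k ω ^ 2 :=
          Finset.sum_le_sum fun k _ => mul_le_mul_of_nonneg_right (hab k) (sq_nonneg _)
      _ ≤ ∑' k, b k * Z k ω ^ 2 :=
          Summable.sum_le_tsum (Finset.range n) (fun k _ => by positivity) hω.2
  have hFmeasAE : AEStronglyMeasurable F μ :=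
    aestronglyMeasurable_of_tendsto_ae atTop (fun n => (hfnmeas n).aestronglyMeasurable) htendf
  have hFle : ∀ᵐ ω ∂μ, ‖F ω‖ ≤ G ω := by
    filter_upwards [haesum] with ω hω
    rw [Real.norm_eq_abs, abs_of_nonneg (Real.exp_pos _).le]
    show Real.exp ((1:ℝ)/2 * ∑' k, a k * Z k ω ^ 2)
      ≤ Real.exp ((1:ℝ)/2 * ∑' k, b k * Z k ω ^ 2)
    refine Real.exp_le_exp.2 (mul_le_mul_of_nonneg_left ?_ (by norm_num))
    exact Summable.tsum_le_tsum (fun k => mul_le_mul_of_nonneg_right (hab k) (sq_nonneg _)) hω.1 hω.2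
  have hFint : Integrable F μ := hGint.mono' hFmeasAE hFle
  refine ⟨hFint, ?_⟩
  have hIlim : Tendsto (fun n => ∫ ω, fn n ω ∂μ) atTop (nhds (∫ ω, F ω ∂μ)) :=
    tendsto_integral_of_dominated_convergence G
      (fun n => (hfnmeas n).aestronglyMeasurable) hGint hbound htendf
  have hint_eq : ∀ n, ∫ ω, fn n ω ∂μ = ∏ k ∈ Finset.range n, (1 - a k) ^ (-(1:ℝ)/2) :=
    fun n => (hfa n).2
  have h2 : Tendsto (fun n => ∏ k ∈ Finset.range n, (1 - a k) ^ (-(1:ℝ)/2)) atTop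
      (nhds (∏' k, (1 - a k) ^ (-(1:ℝ)/2))) := by
    have := hPa.tendsto_prod_nat
    rwa [← hPa.tprod_eq] at this
  have h3 : Tendsto (fun n => ∫ ω, fn n ω ∂μ) atTop
      (nhds (∏' k, (1 - a k) ^ (-(1:ℝ)/2))) := by
    simp only [hint_eq]
    exact h2
  exact tendsto_nhds_unique hIlim h3
end

section
/- Let X be a centered real random variable (E[X] = 0) with E[exp(K_1 X^2)] < \infty for some K_1 > 0, and let a \in \mathbb{R}, y \in \mathbb{R}. Define Z_n = E[exp(a X y / \sqrt{n})] - 1. Then n Z_n \to (a^2 y^2 / 2) E[X^2] as n \to \infty. -/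
open MeasureTheory Filter

lemma my_abs_exp_bound (u : ℝ) : |Real.exp u - 1 - u| ≤ 3 * u ^ 2 * Real.exp |u| := by
  have h2 : (1:ℝ) ≤ Real.exp |u| := Real.one_le_exp (abs_nonneg u)
  rcases le_or_gt |u| 1 with hu | hu
  · have h := Real.abs_exp_sub_one_sub_id_le hu
    nlinarith [sq_nonneg u]
  · have h1 : Real.exp u ≤ Real.exp |u| := Real.exp_le_exp.mpr (le_abs_self u)
    have h3 : |u| ≤ Real.exp |u| := by linarith [Real.add_one_le_exp |u|]
    have h4 : (1:ℝ) < u ^ 2 := by nlinarith [abs_nonneg u, sq_abs u]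
    have h5 : Real.exp u > 0 := Real.exp_pos u
    rw [abs_le]
    constructor <;> nlinarith [neg_abs_le u, le_abs_self u]

lemma my_taylor3 {u : ℝ} (hu : |u| ≤ 1) :
    |Real.exp u - (1 + u + u ^ 2 / 2)| ≤ |u| ^ 3 := by
  have h := Real.exp_bound hu (n := 3) (by norm_num)
  have hs : (∑ m ∈ Finset.range 3, u ^ m / m.factorial) = 1 + u + u ^ 2 / 2 := by
    norm_num [Finset.sum_range_succ, Nat.factorial]
  rw [hs] at h
  have h2 : |u| ^ 3 * ((3:ℕ).succ / ((3:ℕ).factorial * 3)) ≤ |u| ^ 3 := by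
    have : (0:ℝ) ≤ |u| ^ 3 := by positivity
    norm_num [Nat.factorial]
    nlinarith
  linarith

lemma my_sqrt_atTop : Tendsto (fun n : ℕ => Real.sqrt n) atTop atTop := by
  apply tendsto_atTop_atTop.mpr
  intro b
  refine ⟨⌈b ^ 2⌉₊, fun n hn => ?_⟩
  have h1 : b ^ 2 ≤ (n : ℝ) := le_trans (Nat.le_ceil _) (by exact_mod_cast hn)
  calc b ≤ |b| := le_abs_self b
    _ = Real.sqrt (b ^ 2) := (Real.sqrt_sq_eq_abs b).symm
    _ ≤ Real.sqrt n := Real.sqrt_le_sqrt h1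

theorem mgf_expansion_second_order
    {Ω : Type*} [MeasurableSpace Ω] (μ : Measure Ω) [IsProbabilityMeasure μ]
    (X : Ω → ℝ) (hX : Measurable X)
    (hmean : ∫ ω, X ω ∂μ = 0)
    (K₁ : ℝ) (hK₁ : 0 < K₁)
    (hexp : Integrable (fun ω => Real.exp (K₁ * X ω ^ 2)) μ)
    (a y : ℝ) :
    Tendsto
      (fun n : ℕ =>
        (n : ℝ) * ((∫ ω, Real.exp (a * X ω * y / Real.sqrt n) ∂μ) - 1))
      atTop (nhds (a ^ 2 * y ^ 2 / 2 * ∫ ω, X ω ^ 2 ∂μ)) := by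
  set c := a * y with hc
  -- AM-GM type bound
  have hamgm : ∀ x : ℝ, |c * x| ≤ K₁ / 2 * x ^ 2 + c ^ 2 / (2 * K₁) := by
    intro x
    have key : 2 * K₁ * |c * x| ≤ K₁ ^ 2 * x ^ 2 + c ^ 2 := by
      rw [abs_mul]
      nlinarith [sq_nonneg (K₁ * |x| - |c|), sq_abs x, sq_abs c, abs_nonneg c, abs_nonneg x]
    rw [← sub_nonneg, show K₁ / 2 * x ^ 2 + c ^ 2 / (2 * K₁) - |c * x|
        = (K₁ ^ 2 * x ^ 2 + c ^ 2 - 2 * K₁ * |c * x|) / (2 * K₁) by field_simp <;> ring]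
    exact div_nonneg (by linarith) (by linarith)
  -- X is integrable
  have hXint : Integrable X μ := by
    refine (hexp.const_mul (1 / 2 + 1 / (2 * K₁))).mono' hX.aestronglyMeasurable ?_
    filter_upwards with ω
    set x := X ω
    have hE1 : (1:ℝ) ≤ Real.exp (K₁ * x ^ 2) := Real.one_le_exp (by positivity)
    have hE2 : K₁ * x ^ 2 ≤ Real.exp (K₁ * x ^ 2) := by linarith [Real.add_one_le_exp (K₁ * x ^ 2)]
    have h3 : 2 * |x| ≤ 1 + x ^ 2 := by nlinarith [sq_nonneg (|x| - 1), sq_abs x]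
    rw [Real.norm_eq_abs, ← sub_nonneg, show (1 / 2 + 1 / (2 * K₁)) * Real.exp (K₁ * x ^ 2) - |x|
        = ((K₁ + 1) * Real.exp (K₁ * x ^ 2) - 2 * K₁ * |x|) / (2 * K₁) by field_simp <;> ring]
    refine div_nonneg ?_ (by linarith)
    nlinarith [abs_nonneg x]
  -- the division bound c*x/√n ≤ |c*x|
  have hdiv : ∀ (n : ℕ) (x : ℝ), c * x / Real.sqrt n ≤ |c * x| := by
    intro n x
    rcases Nat.eq_zero_or_pos n with h0 | h1
    · simp [h0, abs_nonneg]; positivity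
    · have hs1 : (1:ℝ) ≤ Real.sqrt n := by
        rw [show (1:ℝ) = Real.sqrt 1 by simp]
        exact Real.sqrt_le_sqrt (by exact_mod_cast h1)
      calc c * x / Real.sqrt n ≤ |c * x| / Real.sqrt n := by
            gcongr
            exact le_abs_self _
        _ ≤ |c * x| := div_le_self (abs_nonneg _) hs1
  -- integrability of the exponentials
  have hEn : ∀ n : ℕ, Integrable (fun ω => Real.exp (c * X ω / Real.sqrt n)) μ := by
    intro n
    refine (hexp.const_mul (Real.exp (c ^ 2 / (2 * K₁)))).mono'
      ((Real.measurable_exp.comp ((hX.const_mul c).div_const _)).aestronglyMeasurable) ?_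
    filter_upwards with ω
    rw [Real.norm_eq_abs, abs_of_pos (Real.exp_pos _), ← Real.exp_add]
    apply Real.exp_le_exp.mpr
    have h1 := hdiv n (X ω)
    have h2 := hamgm (X ω)
    have h3 : K₁ / 2 * X ω ^ 2 ≤ K₁ * X ω ^ 2 := by nlinarith [sq_nonneg (X ω)]
    linarith
  -- pointwise limit
  have hlim : ∀ ω : Ω, Tendsto (fun n : ℕ => (n:ℝ) *
      (Real.exp (c * X ω / Real.sqrt n) - 1 - c * X ω / Real.sqrt n)) atTop
      (nhds (c ^ 2 * X ω ^ 2 / 2)) := by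
    intro ω
    set x := X ω with hx
    rw [← tendsto_sub_nhds_zero_iff]
    have hd : Tendsto (fun n : ℕ => |c * x| ^ 3 / Real.sqrt n) atTop (nhds 0) :=
      Tendsto.div_atTop tendsto_const_nhds my_sqrt_atTop
    apply squeeze_zero_norm' _ hd
    filter_upwards [eventually_ge_atTop (⌈(c * x) ^ 2⌉₊ + 1)] with n hn
    have hn1 : 1 ≤ n := le_trans (Nat.le_add_left 1 _) hn
    have hnc : (c * x) ^ 2 ≤ (n:ℝ) := by
      have h1 := Nat.le_ceil ((c * x) ^ 2)
      have h2 : (⌈(c * x) ^ 2⌉₊ : ℝ) ≤ (n:ℝ) := by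
        exact_mod_cast le_trans (Nat.le_succ _) hn
      linarith
    set s := Real.sqrt n with hsdef
    have hs0 : (0:ℝ) < s := Real.sqrt_pos.mpr (by exact_mod_cast Nat.pos_of_ne_zero (by omega))
    have hs2 : s ^ 2 = (n:ℝ) := Real.sq_sqrt (by positivity)
    have hu1 : |c * x / s| ≤ 1 := by
      rw [abs_div, abs_of_pos hs0, div_le_one hs0]
      calc |c * x| = Real.sqrt ((c * x) ^ 2) := (Real.sqrt_sq_eq_abs _).symm
        _ ≤ s := Real.sqrt_le_sqrt hnc
    have htay := my_taylor3 hu1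
    have heq : (n:ℝ) * (Real.exp (c * x / s) - 1 - c * x / s) - c ^ 2 * x ^ 2 / 2
        = (n:ℝ) * (Real.exp (c * x / s) - (1 + c * x / s + (c * x / s) ^ 2 / 2)) := by
      rw [← hs2]; field_simp; ring
    rw [Real.norm_eq_abs, heq, abs_mul, Nat.abs_cast]
    calc (n:ℝ) * |Real.exp (c * x / s) - (1 + c * x / s + (c * x / s) ^ 2 / 2)|
        ≤ (n:ℝ) * |c * x / s| ^ 3 := by
          exact mul_le_mul_of_nonneg_left htay (by positivity)
      _ = |c * x| ^ 3 / s := by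
          rw [abs_div, abs_of_pos hs0, div_pow, ← hs2]; field_simp
  -- measurability
  have hmeas : ∀ n : ℕ, AEStronglyMeasurable (fun ω => (n:ℝ) *
      (Real.exp (c * X ω / Real.sqrt n) - 1 - c * X ω / Real.sqrt n)) μ := by
    intro n
    exact (measurable_const.mul (((Real.measurable_exp.comp
      ((hX.const_mul c).div_const _)).sub measurable_const).sub
      ((hX.const_mul c).div_const _))).aestronglyMeasurable
  -- domination
  have hbound : ∀ᶠ n : ℕ in atTop, ∀ᵐ ω ∂μ, ‖(n:ℝ) *
      (Real.exp (c * X ω / Real.sqrt n) - 1 - c * X ω / Real.sqrt n)‖ ≤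
      (6 * c ^ 2 / K₁ * Real.exp (c ^ 2 / (2 * K₁))) * Real.exp (K₁ * X ω ^ 2) := by
    filter_upwards [eventually_ge_atTop 1] with n hn1
    filter_upwards with ω
    set x := X ω with hx
    set s := Real.sqrt n with hsdef
    have hs0 : (0:ℝ) < s := Real.sqrt_pos.mpr (by exact_mod_cast Nat.pos_of_ne_zero (by omega))
    have hs1 : (1:ℝ) ≤ s := by
      rw [hsdef, show (1:ℝ) = Real.sqrt 1 by simp]
      exact Real.sqrt_le_sqrt (by exact_mod_cast hn1)
    have hs2 : s ^ 2 = (n:ℝ) := Real.sq_sqrt (by positivity)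
    set u := c * x / s with hu
    have h2 := my_abs_exp_bound u
    have h3 : (n:ℝ) * (3 * u ^ 2 * Real.exp |u|) = 3 * (c * x) ^ 2 * Real.exp |u| := by
      rw [hu, ← hs2]; field_simp
    have h4 : |u| ≤ |c * x| := by
      rw [hu, abs_div, abs_of_pos hs0]
      exact div_le_self (abs_nonneg _) hs1
    have h5 : Real.exp |u| ≤ Real.exp (c ^ 2 / (2 * K₁)) * Real.exp (K₁ / 2 * x ^ 2) := by
      rw [← Real.exp_add]
      exact Real.exp_le_exp.mpr (by linarith [hamgm x, h4])
    have h6 : x ^ 2 ≤ 2 / K₁ * Real.exp (K₁ / 2 * x ^ 2) := by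
      have h7 := Real.add_one_le_exp (K₁ / 2 * x ^ 2)
      rw [← sub_nonneg, show 2 / K₁ * Real.exp (K₁ / 2 * x ^ 2) - x ^ 2
          = (2 * Real.exp (K₁ / 2 * x ^ 2) - K₁ * x ^ 2) / K₁ by field_simp <;> ring]
      exact div_nonneg (by nlinarith) (by linarith)
    calc ‖(n:ℝ) * (Real.exp u - 1 - u)‖ = (n:ℝ) * |Real.exp u - 1 - u| := by
          rw [Real.norm_eq_abs, abs_mul, Nat.abs_cast]
      _ ≤ (n:ℝ) * (3 * u ^ 2 * Real.exp |u|) :=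
          mul_le_mul_of_nonneg_left h2 (by positivity)
      _ = 3 * (c * x) ^ 2 * Real.exp |u| := h3
      _ ≤ 3 * (c * x) ^ 2 * (Real.exp (c ^ 2 / (2 * K₁)) * Real.exp (K₁ / 2 * x ^ 2)) :=
          mul_le_mul_of_nonneg_left h5 (by positivity)
      _ = 3 * c ^ 2 * Real.exp (c ^ 2 / (2 * K₁)) * (x ^ 2 * Real.exp (K₁ / 2 * x ^ 2)) := by
          ring
      _ ≤ 3 * c ^ 2 * Real.exp (c ^ 2 / (2 * K₁)) *
          ((2 / K₁ * Real.exp (K₁ / 2 * x ^ 2)) * Real.exp (K₁ / 2 * x ^ 2)) := by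
          apply mul_le_mul_of_nonneg_left _ (by positivity)
          exact mul_le_mul_of_nonneg_right h6 (Real.exp_nonneg _)
      _ = 6 * c ^ 2 / K₁ * Real.exp (c ^ 2 / (2 * K₁)) * Real.exp (K₁ * x ^ 2) := by
          rw [show K₁ * x ^ 2 = K₁ / 2 * x ^ 2 + K₁ / 2 * x ^ 2 by ring, Real.exp_add]
          ring
  -- dominated convergence
  have hDCT : Tendsto (fun n : ℕ => ∫ ω, (n:ℝ) *
      (Real.exp (c * X ω / Real.sqrt n) - 1 - c * X ω / Real.sqrt n) ∂μ) atTop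
      (nhds (∫ ω, c ^ 2 * X ω ^ 2 / 2 ∂μ)) :=
    tendsto_integral_filter_of_dominated_convergence _
      (Eventually.of_forall hmeas) hbound (hexp.const_mul _)
      (Eventually.of_forall hlim)
  have hval : (∫ ω, c ^ 2 * X ω ^ 2 / 2 ∂μ) = a ^ 2 * y ^ 2 / 2 * ∫ ω, X ω ^ 2 ∂μ := by
    rw [← integral_const_mul]
    exact integral_congr_ae (Eventually.of_forall fun ω => by rw [hc]; ring)
  rw [hval] at hDCT
  refine Tendsto.congr (fun n => ?_) hDCT
  have hax : ∀ ω : Ω, a * X ω * y = c * X ω := fun ω => by rw [hc]; ring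
  have hXc : Integrable (fun ω => c * X ω / Real.sqrt n) μ :=
    (hXint.const_mul (c / Real.sqrt n)).congr (Eventually.of_forall fun ω => by ring)
  have hmeanc : ∫ ω, c * X ω / Real.sqrt n ∂μ = 0 := by
    simp_rw [show ∀ ω : Ω, c * X ω / Real.sqrt n = (c / Real.sqrt n) * X ω
      from fun ω => by ring]
    rw [integral_const_mul, hmean, mul_zero]
  simp_rw [hax]
  simp_rw [sub_sub]
  have h2 : Integrable (fun ω => 1 + c * X ω / Real.sqrt n) μ :=
    (integrable_const 1).add hXc
  rw [integral_const_mul, integral_sub (hEn n) h2,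
    integral_add (integrable_const 1) hXc, integral_const, hmeanc]
  simp
end
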